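/- Let r ≥ 2 be a natural number, let the cyclic group ℤ/rℤ act on itself by translation, and fix i ∈ ℤ/rℤ. If W is a ℂ[ℤ/rℤ]-submodule of the standard representation (the sum-zero subspace {v : ℤ/rℤ → ℂ | Σ_x v(x) = 0} of the permutation representation) such that every v ∈ W satisfies v(i) = v(i + 1), then W = 0. In other words, the only subrepresentation of the standard representation of ℤ/rℤ contained in the diagonal hyperplane {v | v(i) = v(i+1)} is zero. -/

import Mathlib

open scoped BigOperators

noncomputable section

variable (G X : Type*) [Group G] [MulAction G X]

/-- The permutation representation of `G` on functions `X → ℂ`:  `(g • v) x = v (g⁻¹ • x)`. -/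
def permRep : Representation ℂ G (X → ℂ) where
  toFun g := LinearMap.funLeft ℂ ℂ (fun x => g⁻¹ • x)
  map_one' := by ext v x; simp [LinearMap.funLeft]
  map_mul' g h := by ext v x; simp [LinearMap.funLeft, mul_smul]

/-- The module structure on `X → ℂ` over the group algebra `ℂ[G]` induced by the
permutation representation. -/
instance permModule : Module (MonoidAlgebra ℂ G) (X → ℂ) :=
  Module.compHom _ ((permRep G X).asAlgebraHom).toRingHom

/-- The standard representation: the sum-zero subspace
`{v : X → ℂ | ∑ x, v x = 0}` of the permutation representation, as a submodule over the
group algebra `ℂ[G]`. -/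
def stdRep [Fintype X] : Submodule (MonoidAlgebra ℂ G) (X → ℂ) where
  carrier := {v : X → ℂ | ∑ x, v x = 0}
  zero_mem' := by simp
  add_mem' := by
    intro a b ha hb
    simp only [Set.mem_setOf_eq, Pi.add_apply, Finset.sum_add_distrib] at *
    rw [ha, hb, add_zero]
  smul_mem' := by
    classical
    intro r v hv
    show ∑ x, ((permRep G X).asAlgebraHom r v) x = 0
    rw [Representation.asAlgebraHom_def, MonoidAlgebra.lift_apply, Finsupp.sum]
    simp only [LinearMap.coe_sum, Finset.sum_apply, LinearMap.smul_apply, Pi.smul_apply,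
      smul_eq_mul]
    rw [Finset.sum_comm]
    have hfix : ∀ g : G, ∑ x, ((permRep G X) g v) x = 0 := by
      intro g
      have : ∀ x, ((permRep G X) g v) x = v (g⁻¹ • x) := fun x => rfl
      simp only [this]
      have := Equiv.sum_comp (MulAction.toPerm (g⁻¹ : G)) v
      exact this.trans hv
    calc ∑ g ∈ r.coeff.support, ∑ x, r.coeff g * ((permRep G X) g v) x
        = ∑ g ∈ r.coeff.support, r.coeff g * ∑ x, ((permRep G X) g v) x := by
          simp [Finset.mul_sum]
      _ = 0 := by simp [hfix]

/-- Let `r ≥ 2`, let the cyclic group `ℤ/rℤ` act on itself by translation (written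
multiplicatively via `Multiplicative (ZMod r)`, so that `g • x = g + x`), and fix
`i ∈ ℤ/rℤ`.  If `W` is a `ℂ[ℤ/rℤ]`-submodule of the standard representation (the sum-zero
subspace of the permutation representation) such that every `v ∈ W` satisfies
`v i = v (i + 1)`, then `W = 0`: the only subrepresentation of the standard representation
contained in the diagonal `Δ_{i, i+1}` is zero. -/
theorem cyclic_standardRep_diagonal_subrep_eq_bot (r : ℕ) [NeZero r] (hr : 2 ≤ r)
    (i : ZMod r)
    (W : Submodule (MonoidAlgebra ℂ (Multiplicative (ZMod r)))
      (Multiplicative (ZMod r) → ℂ))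
    (hWS : W ≤ stdRep (Multiplicative (ZMod r)) (Multiplicative (ZMod r)))
    (hdiag : ∀ v ∈ W, v (Multiplicative.ofAdd i) = v (Multiplicative.ofAdd (i + 1))) :
    W = ⊥ := by
  rw [Submodule.eq_bot_iff]
  intro v hv
  -- Step 1: v (ofAdd j) = v (ofAdd (j+1)) for all j
  have hstep : ∀ j : ZMod r,
      v (Multiplicative.ofAdd j) = v (Multiplicative.ofAdd (j + 1)) := by
    intro j
    set g : Multiplicative (ZMod r) := Multiplicative.ofAdd (i - j)
    have hw : (MonoidAlgebra.single g (1 : ℂ)) • v ∈ W := W.smul_mem _ hv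
    have hsmul : (MonoidAlgebra.single g (1 : ℂ)) • v
        = fun x => v (g⁻¹ * x) := by
      show (permRep (Multiplicative (ZMod r)) (Multiplicative (ZMod r))).asAlgebraHom
        (MonoidAlgebra.single g 1) v = _
      rw [Representation.asAlgebraHom_single_one]
      rfl
    have := hdiag _ hw
    rw [hsmul] at this
    simp only at this
    have h1 : g⁻¹ * Multiplicative.ofAdd i = Multiplicative.ofAdd j := by
      show Multiplicative.ofAdd (-(i - j) + i) = Multiplicative.ofAdd j
      ring_nf
    have h2 : g⁻¹ * Multiplicative.ofAdd (i + 1) = Multiplicative.ofAdd (j + 1) := by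
      show Multiplicative.ofAdd (-(i - j) + (i + 1)) = Multiplicative.ofAdd (j + 1)
      ring_nf
    rw [h1, h2] at this
    exact this
  -- Step 2: v is constant
  have hconst : ∀ x : Multiplicative (ZMod r), v x = v (Multiplicative.ofAdd 0) := by
    have hn : ∀ n : ℕ, v (Multiplicative.ofAdd (n : ZMod r))
        = v (Multiplicative.ofAdd 0) := by
      intro n
      induction n with
      | zero => norm_num
      | succ k ih =>
        rw [← ih, hstep (k : ZMod r)]
        push_cast
        rfl
    intro x
    have := hn (Multiplicative.toAdd x).val
    rwa [ZMod.natCast_val, ZMod.cast_id] at this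
  -- Step 3: sum zero forces the constant to be zero
  have hsum : ∑ x : Multiplicative (ZMod r), v x = 0 := hWS hv
  have hcard : (Fintype.card (Multiplicative (ZMod r)) : ℂ)
      * v (Multiplicative.ofAdd 0) = 0 := by
    rw [← hsum, Finset.sum_congr rfl (fun x _ => hconst x)]
    simp [Finset.sum_const, Finset.card_univ, mul_comm]
  have hr0 : (Fintype.card (Multiplicative (ZMod r)) : ℂ) ≠ 0 := by
    simp only [Fintype.card_multiplicative, ZMod.card]
    exact_mod_cast (NeZero.ne r)
  have h0 : v (Multiplicative.ofAdd 0) = 0 := by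
    rcases mul_eq_zero.mp hcard with h | h
    · exact absurd h hr0
    · exact h
  funext x
  rw [hconst x, h0]
  rfl

end
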